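/- Let γ(u) ∈ 1 + u⁻²ℂ[[u⁻²]] and let μ(u) = γ(u)⁻¹(1+½u⁻¹)⁻¹(1−a₁u⁻¹)⋯(1−a_{2k+1}u⁻¹), where a_{2k+1} is the ♯′-special element of (a₁,…,a_{2k+1}) and a_{2i−1}+a_{2i} ∈ ℤ_{≥0} for i = 1,…,k. Define μ♯(u) = γ(u)⁻¹(1+½u⁻¹)⁻¹(1−a₁u⁻¹)⋯(1−a_{2k}u⁻¹)(1+(1+a_{2k+1})u⁻¹). Then ((2u−1)/(2u+1))·μ♯(−u) ⇒ μ♯(u) if and only if −1 − a_{2k+1} ∈ ℤ_{≥0}. -/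

import Mathlib

open PowerSeries Polynomial

noncomputable section

abbrev PS := PowerSeries ℂ

/-- `f ∈ 1 + u⁻¹ℂ[[u⁻¹]]`, with `X` playing the role of `u⁻¹`. -/
def One1 (f : PS) : Prop := PowerSeries.constantCoeff f = 1

/-- `f ∈ 1 + u⁻²ℂ[[u⁻²]]`: an even power series with constant term 1. -/
def EvenOne (f : PS) : Prop := One1 f ∧ ∀ n, Odd n → PowerSeries.coeff n f = 0

/-- `u^{-deg P}·P(u)` viewed as a power series in `X = u⁻¹`. -/
def lowerP (P : Polynomial ℂ) : PS := (P.reverse : PowerSeries ℂ)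

/-- `f → g`: there is a monic `P` with `f/g = P(u+1)/P(u)`. -/
def Arrow (f g : PS) : Prop :=
  ∃ P : Polynomial ℂ, P.Monic ∧ f * lowerP P = g * lowerP (P.comp (Polynomial.X + 1))

/-- `f ⇒ g`: there is a monic `P` of even degree with `P(u) = P(1−u)` and
`f/g = P(u+1)/P(u)`. -/
def DArrow (f g : PS) : Prop :=
  ∃ P : Polynomial ℂ, P.Monic ∧ Even P.natDegree ∧ P.comp (1 - Polynomial.X) = P ∧
    f * lowerP P = g * lowerP (P.comp (Polynomial.X + 1))

/-- `f(−u)`, i.e. `u⁻¹ ↦ −u⁻¹`. -/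
def negU (f : PS) : PS := PowerSeries.rescale (-1) f

/-- the factor `1 + a·u⁻¹`. -/
def linF (a : ℂ) : PS := 1 + PowerSeries.C a * PowerSeries.X

/-- `f` is a polynomial in `u⁻¹`. -/
def IsPolyPS (f : PS) : Prop := ∃ Q : Polynomial ℂ, (Q : PS) = f

/-- `z ∈ ℤ_{≥0}` (so `a ≥ b` iff `IsNonnegInt (a - b)`). -/
def IsNonnegInt (z : ℂ) : Prop := ∃ n : ℕ, z = n
/-- The ♯′-condition on the list `a 0, …, a (2k)` (0-indexed): for each `i < k`,
whenever `{a p + a q : 2i ≤ p < q ≤ 2k} ∩ ℤ_{≥0}` is non-empty, `a (2i) + a (2i+1)`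
is its minimal element for the order `x ≥ y ↔ x - y ∈ ℤ_{≥0}`. -/
def SharpCond (k : ℕ) (a : ℕ → ℂ) : Prop :=
  ∀ i < k,
    (∃ p q, 2*i ≤ p ∧ p < q ∧ q ≤ 2*k ∧ IsNonnegInt (a p + a q)) →
      IsNonnegInt (a (2*i) + a (2*i+1)) ∧
      ∀ p q, 2*i ≤ p → p < q → q ≤ 2*k → IsNonnegInt (a p + a q) →
        IsNonnegInt (a p + a q - (a (2*i) + a (2*i+1)))

/-- `b` is a re-indexing (permutation) of the first `m` entries of `a`. -/
def PermOf (m : ℕ) (b a : ℕ → ℂ) : Prop :=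
  ∃ σ : Equiv.Perm (Fin m), ∀ i : Fin m, b i = a (σ i)

/-- `x` is a ♯′-special element of the list `a 0, …, a (2k)`. -/
def IsSharpSpecial' (k : ℕ) (a : ℕ → ℂ) (x : ℂ) : Prop :=
  ∃ b : ℕ → ℂ, PermOf (2*k+1) b a ∧ SharpCond k b ∧ b (2*k) = x

open scoped Classical

namespace Aux

def IsIntC (z : ℂ) : Prop := ∃ m : ℤ, z = m

lemma isIntC_of_nni {z : ℂ} (h : IsNonnegInt z) : IsIntC z := by
  obtain ⟨n, rfl⟩ := h; exact ⟨n, by push_cast; ring⟩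

lemma nni_zero : IsNonnegInt 0 := ⟨0, by simp⟩

lemma not_nni_neg_one_sub_nat (n : ℕ) : ¬ IsNonnegInt (-1 - (n : ℂ)) := by
  rintro ⟨m, hm⟩
  have : (m : ℂ) + n + 1 = 0 := by rw [← hm]; ring
  have h2 : ((m + n + 1 : ℕ) : ℂ) = 0 := by push_cast; linear_combination this
  exact absurd (Nat.cast_eq_zero.mp h2) (by omega)

lemma nni_add_nat {z : ℂ} (n : ℕ) (h : IsNonnegInt z) : IsNonnegInt (z + n) := by
  obtain ⟨m, rfl⟩ := h; exact ⟨m + n, by push_cast; ring⟩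

lemma nni_sub_one_or_eq_zero {w : ℂ} (h : IsNonnegInt w) :
    IsNonnegInt (w - 1) ∨ w = 0 := by
  obtain ⟨n, rfl⟩ := h
  cases n with
  | zero => right; simp
  | succ m => left; exact ⟨m, by push_cast; ring⟩

lemma nni_congr {w w' : ℂ} (h : w = w') : IsNonnegInt w ↔ IsNonnegInt w' := by rw [h]

lemma nni_cases {w : ℂ} (h : IsNonnegInt w) : w = 0 ∨ IsNonnegInt (w - 1) :=
  (nni_sub_one_or_eq_zero h).symm.imp id id

/-- tail count of a multiset at threshold `x`. -/
def tcnt (M : Multiset ℂ) (x : ℂ) : ℕ := (M.filter (fun z => IsNonnegInt (z - x))).card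

lemma tcnt_add (M N : Multiset ℂ) (x : ℂ) : tcnt (M + N) x = tcnt M x + tcnt N x := by
  simp [tcnt, Multiset.filter_add]

lemma tcnt_singleton (b x : ℂ) :
    tcnt {b} x = if IsNonnegInt (b - x) then 1 else 0 := by
  simp [tcnt, Multiset.filter_singleton]
  split <;> simp_all

lemma tcnt_map_sub_one (M : Multiset ℂ) (x : ℂ) :
    tcnt (M.map (fun z => z - 1)) x = tcnt M (x + 1) := by
  unfold tcnt
  rw [Multiset.filter_map, Multiset.card_map]
  congr 1
  apply Multiset.filter_congr
  intro z _
  exact (nni_congr (by simp only [Function.comp]; ring)).symm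

lemma tcnt_step (M : Multiset ℂ) (x : ℂ) :
    tcnt M x = tcnt M (x + 1) + M.count x := by
  unfold tcnt
  have hsplit : (M.filter (fun z => IsNonnegInt (z - x)))
      = M.filter (fun z => IsNonnegInt (z - (x+1))) + M.filter (fun z => z = x) := by
    rw [Multiset.filter_add_filter]
    have h1 : M.filter (fun a => IsNonnegInt (a - (x+1)) ∨ a = x)
        = M.filter (fun z => IsNonnegInt (z - x)) := by
      apply Multiset.filter_congr
      intro z _
      constructor
      · rintro (⟨n, hn⟩ | rfl)
        · exact ⟨n + 1, by push_cast; linear_combination hn⟩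
        · simpa using nni_zero
      · intro h
        have := nni_cases (w := z - x) h
        rcases this with h0 | h1
        · right; linear_combination h0
        · left; exact (nni_congr (by ring)).mp h1
    have h2 : M.filter (fun a => IsNonnegInt (a - (x+1)) ∧ a = x) = 0 := by
      rw [Multiset.filter_eq_nil]
      rintro a _ ⟨⟨n, hn⟩, rfl⟩
      exact not_nni_neg_one_sub_nat 0 ⟨n, by push_cast; linear_combination hn⟩
    rw [h1, h2, add_zero]
  rw [hsplit, Multiset.card_add]
  have he : M.filter (fun z => z = x) = M.filter (fun z => x = z) :=
    Multiset.filter_congr (fun z _ => ⟨Eq.symm, Eq.symm⟩)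
  rw [he, Multiset.count, Multiset.countP_eq_card_filter]

end Aux


namespace Aux2

lemma card_parity_of_involution (f : ℂ → ℂ) (hf : ∀ z, f (f z) = z) :
    ∀ (M : Multiset ℂ), M.map f = M →
      M.card % 2 = (M.filter fun z => f z = z).card % 2 := by
  intro M
  induction M using Multiset.strongInductionOn with
  | _ M ih =>
    intro hM
    by_cases hall : ∀ z ∈ M, f z = z
    · rw [Multiset.filter_eq_self.mpr hall]
    · push_neg at hall
      obtain ⟨z, hzM, hz⟩ := hall
      have hfz : f z ∈ M := by
        rw [← hM]; exact Multiset.mem_map_of_mem f hzM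
      have hfzz : f z ≠ z := hz
      have hfz' : f z ∈ M.erase z := by
        rw [Multiset.mem_erase_of_ne hfzz]; exact hfz
      set M' := (M.erase z).erase (f z) with hM'
      have hMdecomp : M = z ::ₘ f z ::ₘ M' := by
        rw [hM', Multiset.cons_erase hfz', Multiset.cons_erase hzM]
      have hinj : Function.Injective f := Function.LeftInverse.injective hf
      have hmap' : M'.map f = M' := by
        rw [hM', Multiset.map_erase f hinj, Multiset.map_erase f hinj, hM, hf z,
          Multiset.erase_comm]
      have hlt : M' < M :=
        lt_of_le_of_lt (Multiset.erase_le _ _) (Multiset.erase_lt.mpr hzM)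
      have hcard : M.card = M'.card + 2 := by
        rw [hMdecomp]; simp
      have hpz : ¬ (f z = z) := hz
      have hpfz : ¬ (f (f z) = f z) := by
        rw [hf z]; intro h; exact hz h.symm
      have hfilter : M.filter (fun z => f z = z) = M'.filter (fun z => f z = z) := by
        rw [hMdecomp]; simp [Multiset.filter_cons, hpz, hpfz]
      rw [hcard, hfilter, Nat.add_mod_right]
      exact ih M' hlt hmap'

lemma sum_range_two_mul {M : Type*} [AddCommMonoid M] (k : ℕ) (f : ℕ → M) :
    ∑ i ∈ Finset.range (2*k), f i = ∑ i ∈ Finset.range k, (f (2*i) + f (2*i+1)) := by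
  induction k with
  | zero => simp
  | succ n ih =>
    have h2 : 2*(n+1) = (2*n)+1+1 := by ring
    rw [h2, Finset.sum_range_succ, Finset.sum_range_succ, ih, Finset.sum_range_succ,
      add_assoc]

lemma prod_range_two_mul {M : Type*} [CommMonoid M] (k : ℕ) (f : ℕ → M) :
    ∏ i ∈ Finset.range (2*k), f i = ∏ i ∈ Finset.range k, (f (2*i) * f (2*i+1)) := by
  induction k with
  | zero => simp
  | succ n ih =>
    have h2 : 2*(n+1) = (2*n)+1+1 := by ring
    rw [h2, Finset.prod_range_succ, Finset.prod_range_succ, ih, Finset.prod_range_succ,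
      mul_assoc]

lemma sum_filter_map_range (n : ℕ) (g : ℕ → ℂ) (p : ℂ → Prop) :
    (((Finset.range n).val.map g).filter p).sum
      = ∑ i ∈ Finset.range n, if p (g i) then g i else 0 := by
  rw [Multiset.filter_map, ← Finset.sum_filter]
  rfl

lemma card_filter_map_range (n : ℕ) (g : ℕ → ℂ) (p : ℂ → Prop) :
    (((Finset.range n).val.map g).filter p).card
      = ∑ i ∈ Finset.range n, if p (g i) then 1 else 0 := by
  rw [Multiset.filter_map, Multiset.card_map, ← Finset.card_filter]
  rfl

end Aux2

namespace Aux3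

lemma reflect_injective (N : ℕ) : Function.Injective (Polynomial.reflect N (R := ℂ)) := by
  intro f g h
  ext i
  have := congrArg (fun p => Polynomial.coeff p (Polynomial.revAt N i)) h
  simpa [Polynomial.coeff_reflect, Polynomial.revAt_invol] using this

lemma reverse_inj {P Q : Polynomial ℂ} (hd : P.natDegree = Q.natDegree)
    (h : P.reverse = Q.reverse) : P = Q := by
  apply reflect_injective P.natDegree
  calc Polynomial.reflect P.natDegree P = P.reverse := rfl
    _ = Q.reverse := h
    _ = Polynomial.reflect Q.natDegree Q := rfl
    _ = Polynomial.reflect P.natDegree Q := by rw [hd]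

lemma lowerP_inj {P Q : Polynomial ℂ} (hd : P.natDegree = Q.natDegree)
    (h : lowerP P = lowerP Q) : P = Q :=
  reverse_inj hd (Polynomial.coe_inj.mp h)

lemma lowerP_mul (P Q : Polynomial ℂ) : lowerP (P * Q) = lowerP P * lowerP Q := by
  unfold lowerP
  rw [Polynomial.reverse_mul_of_domain, Polynomial.coe_mul]

lemma lowerP_prod {ι : Type*} (s : Finset ι) (f : ι → Polynomial ℂ) :
    lowerP (∏ i ∈ s, f i) = ∏ i ∈ s, lowerP (f i) := by
  induction s using Finset.cons_induction with
  | empty => simp [lowerP, Polynomial.reverse]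
  | cons i s hi ih => rw [Finset.prod_cons, Finset.prod_cons, lowerP_mul, ih]

lemma reverse_X_add_C (b : ℂ) : (Polynomial.X + Polynomial.C b).reverse
    = Polynomial.C b * Polynomial.X + 1 := by
  have h1 : (Polynomial.X + Polynomial.C b).natDegree = 1 := Polynomial.natDegree_X_add_C b
  rw [Polynomial.reverse, h1, Polynomial.reflect_add, Polynomial.reflect_C,
    ← pow_one (Polynomial.X (R := ℂ)), Polynomial.reflect_monomial]
  rw [Polynomial.revAt_le (le_refl 1)]
  simp [add_comm]

lemma lowerP_X_add_C (b : ℂ) : lowerP (Polynomial.X + Polynomial.C b) = linF b := by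
  unfold lowerP linF
  rw [reverse_X_add_C]
  push_cast
  ring

lemma constCoeff_linF (b : ℂ) : PowerSeries.constantCoeff (linF b) = 1 := by
  simp [linF]

lemma linF_ne_zero (b : ℂ) : linF b ≠ 0 := by
  intro h
  have := constCoeff_linF b
  rw [h] at this
  simp at this

lemma linF_mul_inv (b : ℂ) : linF b * (linF b)⁻¹ = 1 :=
  PowerSeries.mul_inv_cancel _ (by rw [constCoeff_linF]; exact one_ne_zero)

lemma negU_linF (b : ℂ) : negU (linF b) = linF (-b) := by
  unfold negU linF
  ext n
  rw [PowerSeries.coeff_rescale]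
  match n with
  | 0 => simp
  | 1 => simp
  | (m+2) => simp [PowerSeries.coeff_one, PowerSeries.coeff_C_mul, PowerSeries.coeff_X]

lemma negU_even {γ : PS} (hγ : EvenOne γ) : negU γ = γ := by
  unfold negU
  ext n
  rw [PowerSeries.coeff_rescale]
  rcases Nat.even_or_odd n with he | ho
  · rw [he.neg_one_pow, one_mul]
  · rw [hγ.2 n ho, mul_zero]

lemma one1_ne_zero {f : PS} (h : One1 f) : f ≠ 0 := by
  intro h0
  rw [One1, h0] at h
  simp at h

end Aux3

namespace Aux5

def chain (α : ℂ) (m : ℕ) : Polynomial ℂ :=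
  ∏ j ∈ Finset.range m, (Polynomial.X - Polynomial.C (α - (j : ℂ)))

lemma chain_monic (α : ℂ) (m : ℕ) : (chain α m).Monic :=
  Polynomial.monic_prod_of_monic _ _ (fun j _ => Polynomial.monic_X_sub_C _)

lemma chain_natDegree (α : ℂ) (m : ℕ) : (chain α m).natDegree = m := by
  unfold chain
  rw [Polynomial.natDegree_prod_of_monic _ _ (fun j _ => Polynomial.monic_X_sub_C _)]
  simp only [Polynomial.natDegree_X_sub_C, Finset.sum_const, Finset.card_range,
    smul_eq_mul, mul_one]

lemma chain_comp_add (α : ℂ) (m : ℕ) :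
    (chain α m).comp (Polynomial.X + 1)
      = ∏ j ∈ Finset.range m, (Polynomial.X - Polynomial.C (α - ((j:ℂ)+1))) := by
  unfold chain
  rw [Polynomial.prod_comp]
  refine Finset.prod_congr rfl (fun j _ => ?_)
  rw [Polynomial.sub_comp, Polynomial.X_comp, Polynomial.C_comp]
  simp only [map_sub, map_add, map_one]
  ring

lemma chain_shift (α β : ℂ) (m : ℕ) (hm : α + β = m) :
    (Polynomial.X + Polynomial.C β) * chain α m
      = (Polynomial.X - Polynomial.C α) * (chain α m).comp (Polynomial.X + 1) := by
  rw [chain_comp_add]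
  have e2 : (Polynomial.X + Polynomial.C β) * chain α m
      = ∏ j ∈ Finset.range (m+1), (Polynomial.X - Polynomial.C (α - (j:ℂ))) := by
    rw [Finset.prod_range_succ]
    unfold chain
    rw [mul_comm]
    congr 1
    have hb : Polynomial.C β = -(Polynomial.C (α - (m:ℂ))) := by
      rw [← map_neg]
      congr 1
      linear_combination hm
    rw [hb]
    ring
  have e3 : (Polynomial.X - Polynomial.C α)
        * ∏ j ∈ Finset.range m, (Polynomial.X - Polynomial.C (α - ((j:ℂ)+1)))
      = ∏ j ∈ Finset.range (m+1), (Polynomial.X - Polynomial.C (α - (j:ℂ))) := by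
    rw [Finset.prod_range_succ']
    have h1 : ∀ j ∈ Finset.range m,
        (Polynomial.X - Polynomial.C (α - (((j+1):ℕ):ℂ)))
          = Polynomial.X - Polynomial.C (α - ((j:ℂ)+1)) := by
      intro j _
      congr 1
      push_cast
      ring
    rw [Finset.prod_congr rfl h1]
    have h0 : α - ((0:ℕ):ℂ) = α := by simp
    rw [h0]
    ring
  rw [e2, ← e3]

lemma chain_comp_one_sub (α β : ℂ) (m : ℕ) (hm : α + β = m) :
    (chain α m).comp (1 - Polynomial.X) = (-1)^m * chain β m := by
  unfold chain
  rw [Polynomial.prod_comp]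
  have e1 : ∀ j ∈ Finset.range m,
      (Polynomial.X - Polynomial.C (α - (j:ℂ))).comp (1 - Polynomial.X)
        = (-1) * (Polynomial.X - Polynomial.C (1 - α + (j:ℂ))) := by
    intro j _
    rw [Polynomial.sub_comp, Polynomial.X_comp, Polynomial.C_comp]
    simp only [map_sub, map_add, map_one]
    ring
  rw [Finset.prod_congr rfl e1, Finset.prod_mul_distrib, Finset.prod_const,
    Finset.card_range]
  congr 1
  have e2 : ∀ j ∈ Finset.range m,
      (Polynomial.X - Polynomial.C (1 - α + (j:ℂ)))
        = (fun j' : ℕ => Polynomial.X - Polynomial.C (β - (j':ℂ))) (m - 1 - j) := by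
    intro j hj
    rw [Finset.mem_range] at hj
    have hj' : j ≤ m - 1 := Nat.le_sub_one_of_lt hj
    have hm1 : 1 ≤ m := Nat.one_le_of_lt (Nat.lt_of_le_of_lt (Nat.zero_le j) hj)
    show Polynomial.X - Polynomial.C (1 - α + (j:ℂ))
        = Polynomial.X - Polynomial.C (β - ((m-1-j:ℕ):ℂ))
    have hc : (1 : ℂ) - α + (j:ℂ) = β - ((m-1-j:ℕ):ℂ) := by
      rw [Nat.cast_sub hj', Nat.cast_sub hm1]
      push_cast
      linear_combination (-1 : ℂ) * hm
    rw [hc]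
  rw [Finset.prod_congr rfl e2]
  exact Finset.prod_range_reflect (fun j' : ℕ => Polynomial.X - Polynomial.C (β - (j':ℂ))) m

lemma chain_pair_symm (α β : ℂ) (m : ℕ) (hm : α + β = m) :
    (chain α m * chain β m).comp (1 - Polynomial.X) = chain α m * chain β m := by
  rw [Polynomial.mul_comp, chain_comp_one_sub α β m hm,
    chain_comp_one_sub β α m (by linear_combination hm)]
  calc (-1:Polynomial ℂ)^m * chain β m * ((-1)^m * chain α m)
      = ((-1)^m)^2 * (chain α m * chain β m) := by ring
    _ = chain α m * chain β m := by
        rw [← pow_mul, pow_mul']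
        simp

lemma chain_pair_shift (α β : ℂ) (m : ℕ) (hm : α + β = m) :
    (Polynomial.X + Polynomial.C α) * (Polynomial.X + Polynomial.C β)
        * (chain α m * chain β m)
      = (Polynomial.X - Polynomial.C α) * (Polynomial.X - Polynomial.C β)
        * ((chain α m * chain β m).comp (Polynomial.X + 1)) := by
  rw [Polynomial.mul_comp]
  calc (Polynomial.X + Polynomial.C α) * (Polynomial.X + Polynomial.C β)
        * (chain α m * chain β m)
      = ((Polynomial.X + Polynomial.C β) * chain α m)
        * ((Polynomial.X + Polynomial.C α) * chain β m) := by ring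
    _ = ((Polynomial.X - Polynomial.C α) * (chain α m).comp (Polynomial.X + 1))
        * ((Polynomial.X - Polynomial.C β) * (chain β m).comp (Polynomial.X + 1)) := by
        rw [chain_shift α β m hm, chain_shift β α m (by linear_combination hm)]
    _ = _ := by ring

end Aux5

def cc (k : ℕ) (a : ℕ → ℂ) : ℂ := 1 + a (2*k)

def Npoly (k : ℕ) (a : ℕ → ℂ) : Polynomial ℂ :=
  (∏ i ∈ Finset.range (2*k), (Polynomial.X + Polynomial.C (a i)))
    * (Polynomial.X + Polynomial.C (-(cc k a)))

def Dpoly (k : ℕ) (a : ℕ → ℂ) : Polynomial ℂ :=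
  (∏ i ∈ Finset.range (2*k), (Polynomial.X + Polynomial.C (-(a i))))
    * (Polynomial.X + Polynomial.C (cc k a))


namespace Aux4
open Aux3

variable (k : ℕ) (a : ℕ → ℂ)

lemma Npoly_monic : (Npoly k a).Monic :=
  ((Polynomial.monic_prod_of_monic _ _ (fun i _ => Polynomial.monic_X_add_C _)).mul
    (Polynomial.monic_X_add_C _))

lemma Dpoly_monic : (Dpoly k a).Monic :=
  ((Polynomial.monic_prod_of_monic _ _ (fun i _ => Polynomial.monic_X_add_C _)).mul
    (Polynomial.monic_X_add_C _))

lemma Npoly_natDegree : (Npoly k a).natDegree = 2*k + 1 := by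
  unfold Npoly
  rw [Polynomial.Monic.natDegree_mul
    (Polynomial.monic_prod_of_monic _ _ (fun i _ => Polynomial.monic_X_add_C _))
    (Polynomial.monic_X_add_C _), Polynomial.natDegree_prod_of_monic _ _
    (fun i _ => Polynomial.monic_X_add_C _)]
  simp only [Polynomial.natDegree_X_add_C, Finset.sum_const, Finset.card_range,
    smul_eq_mul, mul_one]

lemma Dpoly_natDegree : (Dpoly k a).natDegree = 2*k + 1 := by
  unfold Dpoly
  rw [Polynomial.Monic.natDegree_mul
    (Polynomial.monic_prod_of_monic _ _ (fun i _ => Polynomial.monic_X_add_C _))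
    (Polynomial.monic_X_add_C _), Polynomial.natDegree_prod_of_monic _ _
    (fun i _ => Polynomial.monic_X_add_C _)]
  simp only [Polynomial.natDegree_X_add_C, Finset.sum_const, Finset.card_range,
    smul_eq_mul, mul_one]

lemma lowerP_Npoly : lowerP (Npoly k a) =
    (∏ i ∈ Finset.range (2*k), linF (a i)) * linF (-(cc k a)) := by
  unfold Npoly
  rw [lowerP_mul, lowerP_prod, lowerP_X_add_C]
  congr 1
  exact Finset.prod_congr rfl (fun i _ => lowerP_X_add_C _)

lemma lowerP_Dpoly : lowerP (Dpoly k a) =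
    (∏ i ∈ Finset.range (2*k), linF (-(a i))) * linF (cc k a) := by
  unfold Dpoly
  rw [lowerP_mul, lowerP_prod, lowerP_X_add_C]
  congr 1
  exact Finset.prod_congr rfl (fun i _ => lowerP_X_add_C _)

lemma comp_X_add_one_monic {P : Polynomial ℂ} (hP : P.Monic) :
    (P.comp (Polynomial.X + 1)).Monic := by
  have := hP.comp_X_add_C (1 : ℂ)
  rwa [Polynomial.C_1] at this

lemma comp_X_add_one_natDegree (P : Polynomial ℂ) :
    (P.comp (Polynomial.X + 1)).natDegree = P.natDegree := by
  rw [Polynomial.natDegree_comp]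
  have : (Polynomial.X + (1:Polynomial ℂ)).natDegree = 1 := by
    rw [← Polynomial.C_1, Polynomial.natDegree_X_add_C]
  rw [this, mul_one]

variable (γ μs : PS)

lemma red1 (hγ : EvenOne γ)
    (hdef : γ * linF (1/2) * μs =
      (∏ i ∈ Finset.range (2*k), linF (-(a i))) * linF (cc k a)) :
    γ * linF (-(1/2)) * negU μs = (∏ i ∈ Finset.range (2*k), linF (a i)) * linF (-(cc k a)) := by
  have h := congrArg (PowerSeries.rescale (-1 : ℂ)) hdef
  rw [map_mul, map_mul, map_mul] at h
  rw [map_prod] at h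
  have h2 : (PowerSeries.rescale (-1:ℂ)) γ = γ := negU_even hγ
  calc γ * linF (-(1/2)) * negU μs
      = (PowerSeries.rescale (-1:ℂ)) γ * (PowerSeries.rescale (-1:ℂ)) (linF (1/2))
          * (PowerSeries.rescale (-1:ℂ)) μs := by
        rw [h2]
        have := negU_linF (1/2 : ℂ)
        unfold negU at this
        rw [this]
        rfl
    _ = (∏ i ∈ Finset.range (2*k), (PowerSeries.rescale (-1:ℂ)) (linF (-(a i))))
          * (PowerSeries.rescale (-1:ℂ)) (linF (cc k a)) := h
    _ = (∏ i ∈ Finset.range (2*k), linF (a i)) * linF (-(cc k a)) := by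
        have h3 := negU_linF (cc k a)
        unfold negU at h3
        rw [h3]
        congr 1
        refine Finset.prod_congr rfl (fun i _ => ?_)
        have h4 := negU_linF (-(a i))
        unfold negU at h4
        rw [h4, neg_neg]

lemma mul_linF_half_ne_zero (hγ : EvenOne γ) : γ * linF (1/2) ≠ 0 := by
  intro h
  have := congrArg (PowerSeries.constantCoeff) h
  rw [map_mul, constCoeff_linF] at this
  rw [show PowerSeries.constantCoeff γ = 1 from hγ.1] at this
  simp at this

lemma red2 (hγ : EvenOne γ)
    (hdef : γ * linF (1/2) * μs =
      (∏ i ∈ Finset.range (2*k), linF (-(a i))) * linF (cc k a))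
    (h h' : PS) :
    (linF (-(1/2)) * (linF (1/2))⁻¹ * negU μs * h = μs * h') ↔
      (lowerP (Npoly k a) * h = lowerP (Dpoly k a) * h') := by
  have hU : γ * linF (1/2) ≠ 0 := mul_linF_half_ne_zero γ hγ
  have e1 : γ * linF (1/2) * (linF (-(1/2)) * (linF (1/2))⁻¹ * negU μs * h)
      = lowerP (Npoly k a) * h := by
    calc γ * linF (1/2) * (linF (-(1/2)) * (linF (1/2))⁻¹ * negU μs * h)
        = (γ * linF (-(1/2)) * negU μs) * h * (linF (1/2) * (linF (1/2))⁻¹) := by ring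
      _ = (γ * linF (-(1/2)) * negU μs) * h := by rw [linF_mul_inv]; ring
      _ = lowerP (Npoly k a) * h := by rw [red1 k a γ μs hγ hdef, lowerP_Npoly]
  have e2 : γ * linF (1/2) * (μs * h') = lowerP (Dpoly k a) * h' := by
    calc γ * linF (1/2) * (μs * h') = (γ * linF (1/2) * μs) * h' := by ring
      _ = lowerP (Dpoly k a) * h' := by rw [hdef, lowerP_Dpoly]
  constructor
  · intro e
    rw [← e1, ← e2, e]
  · intro e
    apply mul_left_cancel₀ hU
    rw [e1, e2, e]

lemma darrow_iff_poly (hγ : EvenOne γ)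
    (hdef : γ * linF (1/2) * μs =
      (∏ i ∈ Finset.range (2*k), linF (-(a i))) * linF (cc k a)) :
    DArrow (linF (-(1/2)) * (linF (1/2))⁻¹ * negU μs) μs ↔
      ∃ P : Polynomial ℂ, P.Monic ∧ Even P.natDegree ∧ P.comp (1 - Polynomial.X) = P ∧
        Npoly k a * P = Dpoly k a * (P.comp (Polynomial.X + 1)) := by
  unfold DArrow
  apply exists_congr
  intro P
  constructor
  · rintro ⟨h1, h2, h3, h4⟩
    refine ⟨h1, h2, h3, ?_⟩
    rw [red2 k a γ μs hγ hdef] at h4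
    apply lowerP_inj
    · rw [(Npoly_monic k a).natDegree_mul h1,
        (Dpoly_monic k a).natDegree_mul (comp_X_add_one_monic h1),
        Npoly_natDegree, Dpoly_natDegree, comp_X_add_one_natDegree]
    · rw [lowerP_mul, lowerP_mul]
      exact h4
  · rintro ⟨h1, h2, h3, h4⟩
    refine ⟨h1, h2, h3, ?_⟩
    rw [red2 k a γ μs hγ hdef, ← lowerP_mul, ← lowerP_mul, h4]

end Aux4

namespace Aux6
open Aux2 Aux5

lemma prod_mul_split {M : Type*} [CommMonoid M] {ι : Type*} (s : Finset ι)
    (f g : ι → M) (x y : M) :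
    ((∏ i ∈ s, f i) * x) * ((∏ i ∈ s, g i) * y) = (∏ i ∈ s, f i * g i) * (x * y) := by
  rw [Finset.prod_mul_distrib]
  exact mul_mul_mul_comm _ _ _ _

lemma sufficiency (k : ℕ) (a : ℕ → ℂ)
    (hpa : ∀ i < k, IsNonnegInt (a (2*i) + a (2*i+1)))
    (n : ℕ) (hc : cc k a = -(n:ℂ)) :
    ∃ P : Polynomial ℂ, P.Monic ∧ Even P.natDegree ∧ P.comp (1 - Polynomial.X) = P ∧
      Npoly k a * P = Dpoly k a * (P.comp (Polynomial.X + 1)) := by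
  have hch : ∀ i, ∃ m : ℕ, i < k → a (2*i) + a (2*i+1) = m := by
    intro i
    by_cases h : i < k
    · obtain ⟨m, hm⟩ := hpa i h; exact ⟨m, fun _ => hm⟩
    · exact ⟨0, fun h' => absurd h' h⟩
  choose mf hmf using hch
  set Blk : ℕ → Polynomial ℂ :=
    fun i => chain (a (2*i)) (mf i) * chain (a (2*i+1)) (mf i) with hBlk
  have hBlkMonic : ∀ i, (Blk i).Monic :=
    fun i => (chain_monic _ _).mul (chain_monic _ _)
  refine ⟨(∏ i ∈ Finset.range k, Blk i) * chain ((n:ℕ):ℂ) (2*n), ?_, ?_, ?_, ?_⟩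
  · exact (Polynomial.monic_prod_of_monic _ _ (fun i _ => hBlkMonic i)).mul (chain_monic _ _)
  · rw [Polynomial.Monic.natDegree_mul
      (Polynomial.monic_prod_of_monic _ _ (fun i _ => hBlkMonic i)) (chain_monic _ _),
      Polynomial.natDegree_prod_of_monic _ _ (fun i _ => hBlkMonic i), chain_natDegree]
    have : ∀ i ∈ Finset.range k, (Blk i).natDegree = mf i + mf i := by
      intro i _
      rw [hBlk]
      simp only []
      rw [Polynomial.Monic.natDegree_mul (chain_monic _ _) (chain_monic _ _),
        chain_natDegree, chain_natDegree]
    rw [Finset.sum_congr rfl this, Finset.sum_add_distrib]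
    exact ⟨(∑ i ∈ Finset.range k, mf i) + n, by ring⟩
  · rw [Polynomial.mul_comp, Polynomial.prod_comp]
    have h1 : ∀ i ∈ Finset.range k, (Blk i).comp (1 - Polynomial.X) = Blk i := by
      intro i hi
      exact chain_pair_symm _ _ _ (hmf i (Finset.mem_range.mp hi))
    rw [Finset.prod_congr rfl h1]
    congr 1
    rw [chain_comp_one_sub ((n:ℕ):ℂ) ((n:ℕ):ℂ) (2*n) (by push_cast; ring)]
    rw [pow_mul]
    simp
  · have hN : Npoly k a
        = (∏ i ∈ Finset.range k,
            ((Polynomial.X + Polynomial.C (a (2*i))) * (Polynomial.X + Polynomial.C (a (2*i+1)))))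
          * (Polynomial.X + Polynomial.C ((n:ℕ):ℂ)) := by
      unfold Npoly
      rw [prod_range_two_mul k (fun i => Polynomial.X + Polynomial.C (a i)), hc, neg_neg]
    have hD : Dpoly k a
        = (∏ i ∈ Finset.range k,
            ((Polynomial.X - Polynomial.C (a (2*i))) * (Polynomial.X - Polynomial.C (a (2*i+1)))))
          * (Polynomial.X - Polynomial.C ((n:ℕ):ℂ)) := by
      unfold Dpoly
      rw [prod_range_two_mul k (fun i => Polynomial.X + Polynomial.C (-(a i))), hc]
      have e : ∀ i ∈ Finset.range k,
          (Polynomial.X + Polynomial.C (-(a (2*i)))) * (Polynomial.X + Polynomial.C (-(a (2*i+1))))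
            = (Polynomial.X - Polynomial.C (a (2*i))) * (Polynomial.X - Polynomial.C (a (2*i+1))) := by
        intro i _
        rw [map_neg, map_neg]
        ring
      rw [Finset.prod_congr rfl e, map_neg]
      ring
    have hPc : ((∏ i ∈ Finset.range k, Blk i) * chain ((n:ℕ):ℂ) (2*n)).comp (Polynomial.X + 1)
        = (∏ i ∈ Finset.range k, (Blk i).comp (Polynomial.X + 1))
          * (chain ((n:ℕ):ℂ) (2*n)).comp (Polynomial.X + 1) := by
      rw [Polynomial.mul_comp, Polynomial.prod_comp]
    rw [hN, hD, hPc]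
    have key : ∀ i ∈ Finset.range k,
        ((Polynomial.X + Polynomial.C (a (2*i))) * (Polynomial.X + Polynomial.C (a (2*i+1)))) * Blk i
          = ((Polynomial.X - Polynomial.C (a (2*i))) * (Polynomial.X - Polynomial.C (a (2*i+1))))
            * ((Blk i).comp (Polynomial.X + 1)) := by
      intro i hi
      have := chain_pair_shift (a (2*i)) (a (2*i+1)) (mf i) (hmf i (Finset.mem_range.mp hi))
      calc ((Polynomial.X + Polynomial.C (a (2*i))) * (Polynomial.X + Polynomial.C (a (2*i+1)))) * Blk i
          = (Polynomial.X + Polynomial.C (a (2*i))) * (Polynomial.X + Polynomial.C (a (2*i+1)))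
            * (chain (a (2*i)) (mf i) * chain (a (2*i+1)) (mf i)) := rfl
        _ = (Polynomial.X - Polynomial.C (a (2*i))) * (Polynomial.X - Polynomial.C (a (2*i+1)))
            * ((chain (a (2*i)) (mf i) * chain (a (2*i+1)) (mf i)).comp (Polynomial.X + 1)) := this
        _ = _ := rfl
    have hlast := chain_shift ((n:ℕ):ℂ) ((n:ℕ):ℂ) (2*n) (by push_cast; ring)
    calc (∏ i ∈ Finset.range k,
            ((Polynomial.X + Polynomial.C (a (2*i))) * (Polynomial.X + Polynomial.C (a (2*i+1)))))
          * (Polynomial.X + Polynomial.C ((n:ℕ):ℂ))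
          * ((∏ i ∈ Finset.range k, Blk i) * chain ((n:ℕ):ℂ) (2*n))
        = (∏ i ∈ Finset.range k,
            ((Polynomial.X + Polynomial.C (a (2*i))) * (Polynomial.X + Polynomial.C (a (2*i+1)))) * Blk i)
          * ((Polynomial.X + Polynomial.C ((n:ℕ):ℂ)) * chain ((n:ℕ):ℂ) (2*n)) :=
          prod_mul_split _ _ _ _ _
      _ = (∏ i ∈ Finset.range k,
            ((Polynomial.X - Polynomial.C (a (2*i))) * (Polynomial.X - Polynomial.C (a (2*i+1))))
              * ((Blk i).comp (Polynomial.X + 1)))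
          * ((Polynomial.X - Polynomial.C ((n:ℕ):ℂ)) * (chain ((n:ℕ):ℂ) (2*n)).comp (Polynomial.X + 1)) := by
          rw [Finset.prod_congr rfl key, hlast]
      _ = (∏ i ∈ Finset.range k,
            ((Polynomial.X - Polynomial.C (a (2*i))) * (Polynomial.X - Polynomial.C (a (2*i+1)))))
          * (Polynomial.X - Polynomial.C ((n:ℕ):ℂ))
          * ((∏ i ∈ Finset.range k, (Blk i).comp (Polynomial.X + 1))
            * (chain ((n:ℕ):ℂ) (2*n)).comp (Polynomial.X + 1)) :=
          (prod_mul_split _ _ _ _ _).symm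


end Aux6

namespace Aux7

lemma roots_X_add_C (b : ℂ) : (Polynomial.X + Polynomial.C b).roots = {-b} := by
  have : Polynomial.X + Polynomial.C b = Polynomial.X - Polynomial.C (-b) := by
    rw [map_neg, sub_neg_eq_add]
  rw [this, Polynomial.roots_X_sub_C]

lemma prod_ne_zero (k : ℕ) (b : ℕ → ℂ) :
    (∏ i ∈ Finset.range k, (Polynomial.X + Polynomial.C (b i))) ≠ 0 :=
  (Polynomial.monic_prod_of_monic _ _ (fun i _ => Polynomial.monic_X_add_C _)).ne_zero

lemma roots_prod_X_add_C (k : ℕ) (b : ℕ → ℂ) :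
    (∏ i ∈ Finset.range k, (Polynomial.X + Polynomial.C (b i))).roots
      = (Finset.range k).val.map (fun i => -(b i)) := by
  rw [Polynomial.roots_prod _ _ (prod_ne_zero k b)]
  simp only [roots_X_add_C]
  exact Multiset.bind_singleton _ _

lemma P_eq_prod {P : Polynomial ℂ} (hP : P.Monic) :
    P = (P.roots.map (fun r => Polynomial.X - Polynomial.C r)).prod :=
  (IsAlgClosed.splits P).eq_prod_roots_of_monic hP

lemma roots_comp_X_add_one {P : Polynomial ℂ} (hP : P.Monic) :
    (P.comp (Polynomial.X + 1)).roots = P.roots.map (fun r => r - 1) := by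
  conv_lhs => rw [P_eq_prod hP]
  rw [Polynomial.multiset_prod_comp, Multiset.map_map]
  have : ∀ r : ℂ, (Polynomial.X - Polynomial.C r).comp (Polynomial.X + 1)
      = Polynomial.X - Polynomial.C (r - 1) := by
    intro r
    rw [Polynomial.sub_comp, Polynomial.X_comp, Polynomial.C_comp]
    simp only [map_sub, map_one]
    ring
  have e : ((fun p : Polynomial ℂ => p.comp (Polynomial.X + 1)) ∘
        fun r : ℂ => Polynomial.X - Polynomial.C r)
      = (fun r : ℂ => Polynomial.X - Polynomial.C r) ∘ (fun r : ℂ => r - 1) := by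
    funext r
    exact this r
  rw [e, ← Multiset.map_map]
  exact Polynomial.roots_multiset_prod_X_sub_C _

lemma card_roots_monic {P : Polynomial ℂ} (hP : P.Monic) :
    Multiset.card P.roots = P.natDegree := by
  exact (IsAlgClosed.splits P).natDegree_eq_card_roots.symm

lemma roots_symm {P : Polynomial ℂ} (hP : P.Monic) (hEv : Even P.natDegree)
    (hsym : P.comp (1 - Polynomial.X) = P) :
    P.roots.map (fun r => 1 - r) = P.roots := by
  have key : P = ((P.roots.map (fun r => 1 - r)).map
      (fun r => Polynomial.X - Polynomial.C r)).prod := by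
    conv_lhs => rw [← hsym]
    conv_lhs => rw [P_eq_prod hP]
    rw [Polynomial.multiset_prod_comp, Multiset.map_map]
    have e : P.roots.map ((fun p : Polynomial ℂ => p.comp (1 - Polynomial.X)) ∘
          fun r : ℂ => Polynomial.X - Polynomial.C r)
        = P.roots.map (fun r : ℂ => (-1 : Polynomial ℂ)
            * (Polynomial.X - Polynomial.C (1 - r))) := by
      apply Multiset.map_congr rfl
      intro r _
      rw [Function.comp_apply, Polynomial.sub_comp, Polynomial.X_comp, Polynomial.C_comp]
      simp only [map_sub, map_one]
      ring
    rw [e, Multiset.prod_map_mul, Multiset.map_const', Multiset.prod_replicate,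
      card_roots_monic hP, hEv.neg_one_pow, one_mul, Multiset.map_map]
    congr 1
  conv_rhs => rw [key]
  exact (Polynomial.roots_multiset_prod_X_sub_C _).symm

lemma even_rootMult_half {P : Polynomial ℂ} (hP : P ≠ 0)
    (hsym : P.comp (1 - Polynomial.X) = P) :
    Even (P.rootMultiplicity (1/2 : ℂ)) := by
  set m := P.rootMultiplicity (1/2 : ℂ) with hm
  set W := P /ₘ (Polynomial.X - Polynomial.C (1/2 : ℂ)) ^ m with hW
  have hdecomp : (Polynomial.X - Polynomial.C (1/2 : ℂ)) ^ m * W = P :=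
    Polynomial.pow_mul_divByMonic_rootMultiplicity_eq P (1/2 : ℂ)
  have hWne : Polynomial.eval (1/2 : ℂ) W ≠ 0 :=
    Polynomial.eval_divByMonic_pow_rootMultiplicity_ne_zero (1/2 : ℂ) hP
  have hcompfac : (Polynomial.X - Polynomial.C (1/2 : ℂ)).comp (1 - Polynomial.X)
      = -(Polynomial.X - Polynomial.C (1/2 : ℂ)) := by
    rw [Polynomial.sub_comp, Polynomial.X_comp, Polynomial.C_comp]
    have : (Polynomial.C (1/2 : ℂ)) + (Polynomial.C (1/2 : ℂ)) = 1 := by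
      rw [← map_add]
      norm_num
    linear_combination -this
  have hkey : (Polynomial.X - Polynomial.C (1/2 : ℂ)) ^ m * W
      = (Polynomial.X - Polynomial.C (1/2 : ℂ)) ^ m * ((-1)^m * W.comp (1 - Polynomial.X)) := by
    conv_lhs => rw [hdecomp, ← hsym]
    conv_lhs => rw [← hdecomp]
    rw [Polynomial.mul_comp, Polynomial.pow_comp, hcompfac, neg_pow]
    ring
  have hcancel : W = (-1)^m * W.comp (1 - Polynomial.X) := by
    have hne : (Polynomial.X - Polynomial.C (1/2 : ℂ)) ^ m ≠ 0 :=
      pow_ne_zero _ (Polynomial.X_sub_C_ne_zero _)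
    exact mul_left_cancel₀ hne hkey
  have heval := congrArg (Polynomial.eval (1/2 : ℂ)) hcancel
  rw [Polynomial.eval_mul, Polynomial.eval_comp] at heval
  have heval2 : Polynomial.eval (1/2 : ℂ) (1 - Polynomial.X) = (1/2 : ℂ) := by
    simp
    norm_num
    done
  rw [heval2] at heval
  have hpow : Polynomial.eval (1/2 : ℂ) ((-1 : Polynomial ℂ)^m) = (-1 : ℂ)^m := by
    rw [Polynomial.eval_pow]
    simp
  rw [hpow] at heval
  have : ((-1 : ℂ)^m - 1) * Polynomial.eval (1/2 : ℂ) W = 0 := by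
    linear_combination -heval
  rcases mul_eq_zero.mp this with h | h
  · have : (-1 : ℂ)^m = 1 := by linear_combination h
    exact (neg_one_pow_eq_one_iff_even (by norm_num : (-1 : ℂ) ≠ 1)).mp this
  · exact absurd h hWne

end Aux7

namespace Aux8
open Aux Aux2 Aux7

lemma sum_map_sub_one (Q : Multiset ℂ) :
    (Q.map (fun z => z - 1)).sum = Q.sum - Q.card := by
  induction Q using Multiset.induction with
  | empty => simp
  | cons a s ih =>
    simp only [Multiset.map_cons, Multiset.sum_cons, ih, Multiset.card_cons]
    push_cast
    ring

lemma isIntC_shift {w : ℂ} (t : ℤ) (h : IsIntC w) : IsIntC ((t:ℂ) - w) := by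
  obtain ⟨s, rfl⟩ := h
  exact ⟨t - s, by push_cast; ring⟩

lemma tcnt_map_range (n : ℕ) (g : ℕ → ℂ) (x : ℂ) :
    tcnt ((Finset.range n).val.map g) x
      = ∑ i ∈ Finset.range n, if IsNonnegInt (g i - x) then 1 else 0 := by
  unfold Aux.tcnt
  exact card_filter_map_range n g _

lemma necessity (k : ℕ) (a : ℕ → ℂ)
    (hcond : SharpCond k a)
    (hpa : ∀ i < k, IsNonnegInt (a (2*i) + a (2*i+1)))
    (P : Polynomial ℂ) (hP : P.Monic) (hEv : Even P.natDegree)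
    (hsym : P.comp (1 - Polynomial.X) = P)
    (hid : Npoly k a * P = Dpoly k a * (P.comp (Polynomial.X + 1))) :
    IsNonnegInt (-(cc k a)) := by
  by_contra hnc
  set c : ℂ := cc k a with hc
  have hc2k : a (2*k) = c - 1 := by rw [hc]; unfold cc; ring
  -- choose the pair sums
  have hch : ∀ i, ∃ m : ℕ, i < k → a (2*i) + a (2*i+1) = m := by
    intro i
    by_cases h : i < k
    · obtain ⟨m, hm⟩ := hpa i h; exact ⟨m, fun _ => hm⟩
    · exact ⟨0, fun h' => absurd h' h⟩
  choose mf hmf using hch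
  -- nonvanishing
  have hPne : P ≠ 0 := hP.ne_zero
  have hPcne : P.comp (Polynomial.X + 1) ≠ 0 := by
    have := hP.comp_X_add_C (1 : ℂ)
    rw [Polynomial.C_1] at this
    exact this.ne_zero
  have hXcne : ∀ b : ℂ, (Polynomial.X + Polynomial.C b) ≠ 0 :=
    fun b => (Polynomial.monic_X_add_C b).ne_zero
  have hNne : Npoly k a ≠ 0 := mul_ne_zero (prod_ne_zero _ _) (hXcne _)
  have hDne : Dpoly k a ≠ 0 := mul_ne_zero (prod_ne_zero _ _) (hXcne _)
  -- the master multiset identity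
  have MI : ((Finset.range (2*k)).val.map (fun i => -(a i)) + {c}) + P.roots
      = ((Finset.range (2*k)).val.map a + {-c}) + P.roots.map (fun r => r - 1) := by
    have h1 : (Npoly k a * P).roots
        = ((Finset.range (2*k)).val.map (fun i => -(a i)) + {c}) + P.roots := by
      rw [Polynomial.roots_mul (mul_ne_zero hNne hPne)]
      congr 1
      unfold Npoly
      rw [Polynomial.roots_mul (mul_ne_zero (prod_ne_zero _ _) (hXcne _)),
        roots_prod_X_add_C, roots_X_add_C, neg_neg]
    have h2 : (Dpoly k a * (P.comp (Polynomial.X + 1))).roots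
        = ((Finset.range (2*k)).val.map a + {-c}) + P.roots.map (fun r => r - 1) := by
      rw [Polynomial.roots_mul (mul_ne_zero hDne hPcne)]
      congr 1
      · unfold Dpoly
        rw [Polynomial.roots_mul (mul_ne_zero (prod_ne_zero _ _) (hXcne _)),
          roots_prod_X_add_C, roots_X_add_C]
        congr 1
        simp
      · exact roots_comp_X_add_one hP
    rw [← h1, ← h2, hid]
  -- the key sharp-condition claim
  have claim : ∀ i, i < k → ∀ p q : ℕ,
      (p = 2*i ∧ q = 2*i+1 ∨ p = 2*i+1 ∧ q = 2*i) →
      (IsNonnegInt (a p - (mf i : ℂ) - c) ↔ IsNonnegInt (a p - c)) := by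
    intro i hik p q hpq
    have hsum : a p + a q = (mf i : ℂ) := by
      rcases hpq with ⟨rfl, rfl⟩ | ⟨rfl, rfl⟩
      · exact hmf i hik
      · rw [add_comm]; exact hmf i hik
    have hqb : 2*i ≤ q ∧ q < 2*k := by
      rcases hpq with ⟨rfl, rfl⟩ | ⟨rfl, rfl⟩ <;> omega
    constructor
    · rintro ⟨n, hn⟩
      exact ⟨n + mf i, by push_cast; linear_combination hn⟩
    · rintro ⟨n, hn⟩
      by_cases hmn : mf i ≤ n
      · exact ⟨n - mf i, by rw [Nat.cast_sub hmn]; linear_combination hn⟩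
      · exfalso
        have hval : a q + a (2*k) = ((mf i - (n+1) : ℕ) : ℂ) := by
          rw [Nat.cast_sub (by omega : n+1 ≤ mf i)]
          push_cast
          linear_combination hsum - hn + hc2k
        obtain ⟨-, hmin⟩ := hcond i hik ⟨q, 2*k, hqb.1, hqb.2, le_rfl, ⟨_, hval⟩⟩
        have hthis := hmin q (2*k) hqb.1 hqb.2 le_rfl ⟨_, hval⟩
        have hval2 : a q + a (2*k) - (a (2*i) + a (2*i+1)) = -1 - (n:ℂ) := by
          rw [hval, hmf i hik, Nat.cast_sub (by omega : n+1 ≤ mf i)]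
          push_cast
          ring
        rw [hval2] at hthis
        exact not_nni_neg_one_sub_nat n hthis
  -- Step A : tail counts at c
  have hA := congrArg (fun M => tcnt M c) MI
  simp only [tcnt_add, tcnt_singleton, tcnt_map_sub_one, tcnt_step P.roots c] at hA
  rw [tcnt_map_range (2*k) (fun i => -(a i)) c, tcnt_map_range (2*k) a c] at hA
  have hsums : (∑ i ∈ Finset.range (2*k), if IsNonnegInt (-(a i) - c) then 1 else 0)
      = ∑ i ∈ Finset.range (2*k), if IsNonnegInt (a i - c) then 1 else 0 := by
    rw [sum_range_two_mul, sum_range_two_mul]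
    apply Finset.sum_congr rfl
    intro i hi
    have hik := Finset.mem_range.mp hi
    have e1 : IsNonnegInt (-(a (2*i)) - c) ↔ IsNonnegInt (a (2*i+1) - c) := by
      refine Iff.trans ?_ (claim i hik (2*i+1) (2*i) (Or.inr ⟨rfl, rfl⟩))
      exact nni_congr (by linear_combination -(hmf i hik))
    have e2 : IsNonnegInt (-(a (2*i+1)) - c) ↔ IsNonnegInt (a (2*i) - c) := by
      refine Iff.trans ?_ (claim i hik (2*i) (2*i+1) (Or.inl ⟨rfl, rfl⟩))
      exact nni_congr (by linear_combination -(hmf i hik))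
    rw [if_congr e1 rfl rfl, if_congr e2 rfl rfl]
    omega
  rw [hsums] at hA
  have hcc : (if IsNonnegInt (c - c) then 1 else 0) = 1 := by
    rw [if_pos]
    exact nni_congr (by ring) |>.mp nni_zero
  rw [hcc] at hA
  -- deduce -2c ∈ ℤ≥0 and it is odd
  have h2c : IsNonnegInt (-c - c) := by
    by_contra h2
    rw [if_neg h2] at hA
    omega
  obtain ⟨M, hM⟩ := h2c
  have hModd : M % 2 = 1 := by
    rcases Nat.even_or_odd M with ⟨r, hr⟩ | ⟨r, hr⟩
    · exfalso
      apply hnc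
      exact ⟨r, by subst hr; push_cast at hM ⊢; linear_combination (1/2 : ℂ) * hM⟩
    · omega
  -- Step B : parity in the coset of c
  set p0 : ℂ → Prop := fun z => IsIntC (z - c) with hp0
  set Q : Multiset ℂ := P.roots.filter p0 with hQ
  have hclosed : ∀ (z : ℂ) (t : ℤ), p0 z → IsIntC ((t:ℂ) - (z - c)) := by
    intro z t hz
    exact isIntC_shift t hz
  have hmem : ∀ z w : ℂ, (∃ t : ℤ, w - c = (t:ℂ) - (z - c)) → (p0 z ↔ p0 w) := by
    intro z w ⟨t, ht⟩
    constructor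
    · intro hz
      rw [hp0]
      simp only []
      rw [ht]
      exact isIntC_shift t hz
    · intro hw
      rw [hp0]
      simp only []
      have : z - c = (t:ℂ) - (w - c) := by linear_combination ht
      rw [this]
      exact isIntC_shift t hw
  -- symmetry of Q under z ↦ 1 - z
  have hRsym := roots_symm hP hEv hsym
  have hQsym : Q.map (fun z => 1 - z) = Q := by
    rw [hQ]
    conv_rhs => rw [← hRsym]
    rw [Multiset.filter_map]
    congr 1
    apply Multiset.filter_congr
    intro z _
    exact hmem z (1 - z) ⟨1 + M, by push_cast; linear_combination hM⟩ |>.symm.symm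
  -- parity: Q.card is even
  have hpar := card_parity_of_involution (fun z => 1 - z) (fun z => by ring) Q hQsym
  have hfixcard : (Q.filter (fun z => (fun z => 1 - z) z = z)).card
      = Multiset.count (1/2 : ℂ) Q := by
    have hfe : Q.filter (fun z => (fun z => 1 - z) z = z) = Q.filter (fun z => z = (1/2:ℂ)) := by
      apply Multiset.filter_congr
      intro z _
      constructor
      · intro h; linear_combination (-1/2 : ℂ) * h
      · intro h; linear_combination (-2 : ℂ) * h
    rw [hfe]
    have he2 : Q.filter (fun z => z = (1/2:ℂ)) = Q.filter (fun z => (1/2:ℂ) = z) :=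
      Multiset.filter_congr (fun z _ => ⟨Eq.symm, Eq.symm⟩)
    rw [he2, Multiset.count, Multiset.countP_eq_card_filter]
  have heven : Even (Multiset.count (1/2:ℂ) Q) := by
    rw [hQ, Multiset.count_filter]
    split_ifs
    · rw [Polynomial.count_roots]; exact even_rootMult_half hPne hsym
    · exact Even.zero
  have hQeven : Q.card % 2 = 0 := by
    rw [hpar, hfixcard]
    obtain ⟨r, hr⟩ := heven
    omega
  -- the weighted (sum) version of the master identity in the coset of c
  have hsumMI := congrArg (fun Mset : Multiset ℂ => (Mset.filter p0).sum) MI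
  simp only [Multiset.filter_add, Multiset.sum_add] at hsumMI
  have hshiftiff : ∀ z : ℂ, (p0 ∘ (fun r : ℂ => r - 1)) z ↔ p0 z := by
    intro z
    constructor
    · rintro ⟨t, ht⟩; exact ⟨t + 1, by push_cast; linear_combination ht⟩
    · rintro ⟨t, ht⟩; exact ⟨t - 1, by push_cast; linear_combination ht⟩
  have hshift : (P.roots.map (fun r => r - 1)).filter p0 = Q.map (fun z => z - 1) := by
    rw [Multiset.filter_map, hQ]
    congr 1
    exact Multiset.filter_congr (fun z _ => hshiftiff z)
  rw [hshift, sum_map_sub_one] at hsumMI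
  have hp0c : p0 c := ⟨0, by push_cast; ring⟩
  have hp0mc : p0 (-c) := ⟨(M:ℤ), by push_cast; linear_combination hM⟩
  have hfc : (Multiset.filter p0 ({c} : Multiset ℂ)).sum = c := by
    rw [Multiset.filter_singleton, if_pos hp0c, Multiset.sum_singleton]
  have hfmc : (Multiset.filter p0 ({-c} : Multiset ℂ)).sum = -c := by
    rw [Multiset.filter_singleton, if_pos hp0mc, Multiset.sum_singleton]
  rw [hfc, hfmc, sum_filter_map_range (2*k) (fun i => -(a i)) p0,
    sum_filter_map_range (2*k) a p0] at hsumMI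
  set S : ℂ := ∑ i ∈ Finset.range (2*k), if p0 (a i) then a i else 0 with hS
  have hterm : ∀ i ∈ Finset.range (2*k),
      (if p0 (-(a i)) then -(a i) else 0) = -(if p0 (a i) then a i else 0) := by
    intro i _
    have hiff : p0 (-(a i)) ↔ p0 (a i) :=
      (hmem (a i) (-(a i)) ⟨(M:ℤ), by push_cast; linear_combination hM⟩).symm
    rw [if_congr hiff rfl rfl]
    split_ifs <;> simp
  rw [Finset.sum_congr rfl hterm, Finset.sum_neg_distrib, ← hS] at hsumMI
  have hQcardC : ((Q.card : ℕ) : ℂ) = 2 * S + (M:ℂ) := by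
    linear_combination hsumMI + hM
  have hSpair : S = ∑ i ∈ Finset.range k, (if p0 (a (2*i)) then ((mf i : ℕ):ℂ) else 0) := by
    rw [hS, sum_range_two_mul]
    apply Finset.sum_congr rfl
    intro i hi
    have hik := Finset.mem_range.mp hi
    have hiff : p0 (a (2*i+1)) ↔ p0 (a (2*i)) :=
      (hmem (a (2*i)) (a (2*i+1))
        ⟨(mf i : ℤ) + (M:ℤ), by push_cast; linear_combination (hmf i hik) + hM⟩).symm
    rw [if_congr hiff rfl rfl]
    split_ifs with h
    · exact hmf i hik
    · simp
  set tnat : ℕ := ∑ i ∈ Finset.range k, if p0 (a (2*i)) then mf i else 0 with htn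
  have htcast : ((tnat:ℕ):ℂ) = ∑ i ∈ Finset.range k,
      (if p0 (a (2*i)) then ((mf i : ℕ):ℂ) else 0) := by
    rw [htn, Nat.cast_sum]
    apply Finset.sum_congr rfl
    intro i _
    split_ifs <;> simp
  have hqc2 : ((Q.card : ℕ) : ℂ) = ((M + 2 * tnat : ℕ) : ℂ) := by
    rw [hQcardC, hSpair, ← htcast]
    push_cast
    ring
  have hfinal : Q.card = M + 2 * tnat := Nat.cast_injective hqc2
  omega


end Aux8

open Aux Aux4 Aux6 Aux8 in
/-- With μ♯ as in the setup: ((2u−1)/(2u+1))·μ♯(−u) ⇒ μ♯(u) iff a_{2k+1} ≤ −1. -/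
theorem darrow_twist_sharp_iff_special_le_neg_one (k : ℕ) (a : ℕ → ℂ) (γ μs : PS)
    (hγ : EvenOne γ) (hμs : One1 μs)
    (hcond : SharpCond k a)
    (hpa : ∀ i < k, IsNonnegInt (a (2*i) + a (2*i+1)))
    (hdef : γ * linF (1/2) * μs =
      (∏ i ∈ Finset.range (2*k), linF (-(a i))) * linF (1 + a (2*k))) :
    DArrow (linF (-(1/2)) * (linF (1/2))⁻¹ * negU μs) μs ↔
      IsNonnegInt (-1 - a (2*k)) := by
  have hdef' : γ * linF (1/2) * μs =
      (∏ i ∈ Finset.range (2*k), linF (-(a i))) * linF (cc k a) := hdef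
  rw [darrow_iff_poly k a γ μs hγ hdef']
  constructor
  · rintro ⟨P, h1, h2, h3, h4⟩
    have hres := necessity k a hcond hpa P h1 h2 h3 h4
    exact (Aux.nni_congr (show (-1 : ℂ) - a (2*k) = -(cc k a) by unfold cc; ring)).mpr hres
  · rintro ⟨n, hn⟩
    have hcc : cc k a = -((n:ℕ):ℂ) := by unfold cc; linear_combination -hn
    exact sufficiency k a hpa n hcc
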